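/- The cyclic sum map c : T(V) → T(V) vanishes on the commutator subspace [T(V), T(V)], hence induces a well-defined linear map c̃ : T(V)/[T(V),T(V)] → T(V). Moreover, over a field of characteristic zero, c̃ is injective, i.e., c(w) = 0 for a homogeneous element w of degree r ≥ 1 implies w ∈ [T(V),T(V)]. -/

import Mathlib

open scoped TensorProduct BigOperators
noncomputable section

/-- The free associative algebra on `n` (degree-one) variables, realized as the
monoid algebra of the free monoid on `Fin n`. -/
abbrev FA (k : Type*) [CommRing k] (n : ℕ) := MonoidAlgebra k (FreeMonoid (Fin n))

namespace FA

variable {k : Type*} [CommRing k] {n : ℕ}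

/-- The monomial (word) `x_{p 0} x_{p 1} ⋯` associated to a list of indices. -/
def word (p : List (Fin n)) : FA k n := MonoidAlgebra.single (FreeMonoid.ofList p) 1

/-- The generator `x_i`. -/
def X (i : Fin n) : FA k n := word [i]

/-- Cyclic sum of a monomial: `c(a_1⋯a_r) = ∑_i a_i⋯a_r a_1⋯a_{i-1}`. -/
def cycWord (p : List (Fin n)) : FA k n :=
  ∑ i ∈ Finset.range p.length, word (p.rotate i)

/-- Cyclic sum operator `c : T(V) → T(V)`, extended linearly from monomials. -/
def cyc (f : FA k n) : FA k n :=
  f.coeff.sum fun p a => a • cycWord (FreeMonoid.toList p)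

/-- Cyclic derivative of a monomial: `∂_x(p) = ∑_{p = u x v} v u`. -/
def cycDerWord (x : Fin n) (p : List (Fin n)) : FA k n :=
  ∑ i ∈ Finset.range p.length,
    if p[i]? = some x then word (p.drop (i + 1) ++ p.take i) else 0

/-- Cyclic derivative `∂_x : T(V) → T(V)`, extended linearly from monomials. -/
def cycDer (x : Fin n) (f : FA k n) : FA k n :=
  f.coeff.sum fun p a => a • cycDerWord x (FreeMonoid.toList p)

/-- Ordinary partial derivative of a monomial: `∂p/∂x = ∑_{p = u x v} u ⊗ v`. -/
def pderWord (x : Fin n) (p : List (Fin n)) : FA k n ⊗[k] FA k n :=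
  ∑ i ∈ Finset.range p.length,
    if p[i]? = some x then (word (p.take i)) ⊗ₜ[k] (word (p.drop (i + 1))) else 0

/-- Ordinary partial derivative `∂/∂x : T(V) → T(V) ⊗ T(V)`, extended linearly. -/
def pder (x : Fin n) (f : FA k n) : FA k n ⊗[k] FA k n :=
  f.coeff.sum fun p a => a • pderWord x (FreeMonoid.toList p)

/-- `f` is homogeneous of degree `r`: every monomial in its support is a word of length `r`. -/
def IsHomog (r : ℕ) (f : FA k n) : Prop :=
  ∀ p ∈ f.coeff.support, (FreeMonoid.toList p).length = r

end FA

namespace FA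

variable {k : Type*} [CommRing k] {n : ℕ}

lemma word_mul (p q : List (Fin n)) : (word p : FA k n) * word q = word (p ++ q) := by
  simp [word, MonoidAlgebra.single_mul_single, FreeMonoid.ofList_append]

lemma cyc_zero : cyc (0 : FA k n) = 0 := by
  simp [cyc]

lemma cyc_single (q : FreeMonoid (Fin n)) (a : k) :
    cyc (MonoidAlgebra.single q a : FA k n) = a • cycWord (FreeMonoid.toList q) := by
  unfold cyc
  rw [MonoidAlgebra.coeff_single, Finsupp.sum_single_index]
  simp

lemma cyc_add (f g : FA k n) : cyc (f + g) = cyc f + cyc g := by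
  unfold cyc
  rw [MonoidAlgebra.coeff_add]
  apply Finsupp.sum_add_index' <;> intros <;> simp [add_smul]

lemma cyc_sub (f g : FA k n) : cyc (f - g) = cyc f - cyc g := by
  unfold cyc
  rw [MonoidAlgebra.coeff_sub]
  apply Finsupp.sum_sub_index
  intros; simp [sub_smul]

lemma cycWord_rotate_one (q : List (Fin n)) :
    (cycWord (q.rotate 1) : FA k n) = cycWord q := by
  classical
  set m := q.length with hm
  have hlen : (q.rotate 1).length = m := by simp [hm]
  set f : ℕ → FA k n := fun i => word (q.rotate i) with hf
  have h1 : (cycWord (q.rotate 1) : FA k n) = ∑ i ∈ Finset.range m, f (i + 1) := by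
    rw [cycWord, hlen]
    refine Finset.sum_congr rfl fun i _ => ?_
    rw [hf, List.rotate_rotate, add_comm]
  have h2 : (∑ i ∈ Finset.range m, f (i + 1)) + f 0 =
      (∑ i ∈ Finset.range m, f i) + f 0 := by
    have e1 := Finset.sum_range_succ' f m
    have e2 := Finset.sum_range_succ f m
    have hfm : f m = f 0 := by simp [hf, hm, List.rotate_length]
    rw [← e1, e2, hfm]
  have h3 : (∑ i ∈ Finset.range m, f (i + 1)) = ∑ i ∈ Finset.range m, f i :=
    add_right_cancel h2
  rw [h1, h3, cycWord]

lemma cycWord_rotate (q : List (Fin n)) (j : ℕ) :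
    (cycWord (q.rotate j) : FA k n) = cycWord q := by
  induction j with
  | zero => simp
  | succ j ih =>
      have : q.rotate (j + 1) = (q.rotate j).rotate 1 := by
        rw [List.rotate_rotate]
      rw [this, cycWord_rotate_one, ih]

lemma cycWord_append_comm (u v : List (Fin n)) :
    (cycWord (u ++ v) : FA k n) = cycWord (v ++ u) := by
  have : (u ++ v).rotate u.length = v ++ u := List.rotate_append_length_eq u v
  rw [← this, cycWord_rotate]

lemma cyc_mul_comm (a b : FA k n) : cyc (a * b) = cyc (b * a) := by
  induction a using MonoidAlgebra.induction_linear with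
  | zero => simp [cyc_zero]
  | add f g hf hg => rw [add_mul, mul_add, cyc_add, cyc_add, hf, hg]
  | single u α =>
      induction b using MonoidAlgebra.induction_linear with
      | zero => simp [cyc_zero]
      | add f g hf hg => rw [add_mul, mul_add, cyc_add, cyc_add, hf, hg]
      | single v β =>
          rw [MonoidAlgebra.single_mul_single, MonoidAlgebra.single_mul_single,
            cyc_single, cyc_single, mul_comm β α]
          congr 1
          rw [FreeMonoid.toList_mul, FreeMonoid.toList_mul, cycWord_append_comm]

end FA

/-- The cyclic sum `c` vanishes on commutators (hence induces a map on
`Pot(V) = T(V)/[T(V),T(V)]`), and over a characteristic-zero field the induced map is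
injective: if `c(w) = 0` for `w` homogeneous of degree `r ≥ 1`, then `w` lies in the
linear span of commutators. -/
theorem cyc_vanishes_on_commutators_and_injective {k : Type*} [Field k] [CharZero k]
    (n : ℕ) :
    (∀ a b : FA k n, FA.cyc (a * b - b * a) = 0) ∧
    (∀ r : ℕ, 1 ≤ r → ∀ w : FA k n, FA.IsHomog r w → FA.cyc w = 0 →
      w ∈ Submodule.span k {x : FA k n | ∃ a b : FA k n, x = a * b - b * a}) := by
  classical
  set S : Submodule k (FA k n) :=
    Submodule.span k {x : FA k n | ∃ a b : FA k n, x = a * b - b * a} with hS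
  have hcomm : ∀ a b : FA k n, a * b - b * a ∈ S := fun a b =>
    Submodule.subset_span ⟨a, b, rfl⟩
  have hrot1 : ∀ q : List (Fin n), q ≠ [] →
      (FA.word q : FA k n) - FA.word (q.rotate 1) ∈ S := by
    intro q hq
    match q, hq with
    | x :: t, _ =>
      have h1 : (x :: t).rotate 1 = t ++ [x] := by
        rw [List.rotate_cons_succ, List.rotate_zero]
      rw [h1]
      have h2 : (FA.word (x :: t) : FA k n) = FA.word [x] * FA.word t := by
        rw [FA.word_mul]; rfl
      have h3 : (FA.word (t ++ [x]) : FA k n) = FA.word t * FA.word [x] := by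
        rw [FA.word_mul]
      rw [h2, h3]
      exact hcomm _ _
  have hrot : ∀ q : List (Fin n), q ≠ [] → ∀ i : ℕ,
      (FA.word q : FA k n) - FA.word (q.rotate i) ∈ S := by
    intro q hq i
    induction i with
    | zero => simp
    | succ i ih =>
        have hne : q.rotate i ≠ [] := by
          intro h
          apply hq
          have := List.length_rotate q i
          rw [h] at this
          exact List.length_eq_zero_iff.mp this.symm
        have key : (FA.word q : FA k n) - FA.word (q.rotate (i + 1)) =
            ((FA.word q : FA k n) - FA.word (q.rotate i)) +
            ((FA.word (q.rotate i) : FA k n) - FA.word ((q.rotate i).rotate 1)) := by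
          rw [List.rotate_rotate]
          abel
        rw [key]
        exact add_mem ih (hrot1 _ hne)
  have hword : ∀ q : List (Fin n), q ≠ [] →
      (q.length • FA.word q : FA k n) - FA.cycWord q ∈ S := by
    intro q hq
    have : (q.length • FA.word q : FA k n) - FA.cycWord q =
        ∑ i ∈ Finset.range q.length, ((FA.word q : FA k n) - FA.word (q.rotate i)) := by
      rw [Finset.sum_sub_distrib, FA.cycWord, Finset.sum_const, Finset.card_range]
    rw [this]
    exact Submodule.sum_mem _ fun i _ => hrot q hq i
  constructor
  · intro a b
    rw [FA.cyc_sub, FA.cyc_mul_comm, sub_self]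
  · intro r hr w hw hc
    have hwsum : w = ∑ p ∈ w.coeff.support, (w.coeff p) • FA.word (FreeMonoid.toList p) := by
      conv_lhs => rw [← MonoidAlgebra.sum_coeff_single w]
      rw [Finsupp.sum]
      refine Finset.sum_congr rfl fun p _ => ?_
      rw [FA.word, FreeMonoid.ofList_toList, MonoidAlgebra.smul_single', mul_one]
    have hcycsum : FA.cyc w = ∑ p ∈ w.coeff.support, (w.coeff p) • FA.cycWord (FreeMonoid.toList p) := rfl
    have hrw : (r • w : FA k n) - FA.cyc w ∈ S := by
      have e1 : (r • w : FA k n) =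
          ∑ p ∈ w.coeff.support, (w.coeff p) • (r • FA.word (FreeMonoid.toList p) : FA k n) := by
        conv_lhs => rw [hwsum]
        rw [Finset.smul_sum]
        exact Finset.sum_congr rfl fun p _ => smul_comm _ _ _
      have : (r • w : FA k n) - FA.cyc w = ∑ p ∈ w.coeff.support,
          (w.coeff p) • ((r • FA.word (FreeMonoid.toList p) : FA k n) -
            FA.cycWord (FreeMonoid.toList p)) := by
        rw [e1, hcycsum, ← Finset.sum_sub_distrib]
        exact Finset.sum_congr rfl fun p _ => (smul_sub _ _ _).symm
      rw [this]
      refine Submodule.sum_mem _ fun p hp => Submodule.smul_mem _ _ ?_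
      have hlen := hw p hp
      have hne : FreeMonoid.toList p ≠ [] := by
        intro h
        rw [h] at hlen
        simp at hlen
        omega
      have := hword (FreeMonoid.toList p) hne
      rwa [hlen] at this
    have hrwS : (r • w : FA k n) ∈ S := by
      have : (r • w : FA k n) = ((r • w : FA k n) - FA.cyc w) + FA.cyc w := by abel
      rw [this, hc, add_zero, sub_zero] at *
      exact hrw
    have hcast : ((r : k) • w : FA k n) ∈ S := by
      rwa [Nat.cast_smul_eq_nsmul]
    have hrne : (r : k) ≠ 0 := Nat.cast_ne_zero.mpr (by omega)
    have : w = (r : k)⁻¹ • ((r : k) • w) := by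
      rw [smul_smul, inv_mul_cancel₀ hrne, one_smul]
    rw [this]
    exact Submodule.smul_mem _ _ hcast
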